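/- The set L of points [η_0 : ... : η_5] ∈ ℙ^5(ℝ) satisfying η_0 η_5 - η_1 η_4 + η_2 η_3 = 0 and η_0^4 + η_1^4 + η_2^4 = η_3^4 + η_4^4 + η_5^4 = 1 (after normalization), identified with the set of pairs (u, v) ∈ ℝ^3 × ℝ^3 with ⟨u,v⟩ = 0, u ≠ 0, v ≠ 0, and η_0^4+η_1^4+η_2^4 = η_5^4+η_4^4+η_3^4, modulo simultaneous sign change (u,v) ↦ (-u,-v), is homeomorphic to SO(3)/{I, σ} where σ = diag(-1,-1,1), via (u,v) ↦ the class of the orthonormal frame (u/‖u‖, v/‖v‖, (u/‖u‖)×(v/‖v‖)). -/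

import Mathlib

open InnerProductSpace

/-- Cross product of two vectors of `EuclideanSpace ℝ (Fin 3)`. -/
noncomputable def cross3 (u v : EuclideanSpace ℝ (Fin 3)) : EuclideanSpace ℝ (Fin 3) :=
  (WithLp.equiv 2 (Fin 3 → ℝ)).symm
    ![u 1 * v 2 - u 2 * v 1, u 2 * v 0 - u 0 * v 2, u 0 * v 1 - u 1 * v 0]

/-- The quartic normalization `u ↦ u₁⁴ + u₂⁴ + u₃⁴`. -/
noncomputable def q4 (u : EuclideanSpace ℝ (Fin 3)) : ℝ := u 0 ^ 4 + u 1 ^ 4 + u 2 ^ 4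

/-- The real locus: pairs `(u,v)` of orthogonal vectors of `ℝ³` with
`q4 u = q4 v = 1` (normalized Plücker coordinates satisfying the relation). -/
abbrev LocusL : Type :=
  {p : EuclideanSpace ℝ (Fin 3) × EuclideanSpace ℝ (Fin 3) //
    ⟪p.1, p.2⟫_ℝ = 0 ∧ p.1 ≠ 0 ∧ p.2 ≠ 0 ∧ q4 p.1 = 1 ∧ q4 p.2 = 1}

/-- Simultaneous sign change on the locus. -/
def relL (p q : LocusL) : Prop := q.1 = p.1 ∨ q.1 = (-p.1.1, -p.1.2)

/-- `SO(3)` as a subtype of matrices. -/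
abbrev SO3 : Type := {M : Matrix (Fin 3) (Fin 3) ℝ // M.transpose * M = 1 ∧ M.det = 1}

/-- The matrix `σ = diag(-1,-1,1)`. -/
def σmat : Matrix (Fin 3) (Fin 3) ℝ := Matrix.diagonal ![-1, -1, 1]

/-- The relation identifying `M` with `M * σ` in `SO(3)`. -/
def relSO3 (M N : SO3) : Prop := (N : Matrix (Fin 3) (Fin 3) ℝ) = M ∨
  (N : Matrix (Fin 3) (Fin 3) ℝ) = (M : Matrix (Fin 3) (Fin 3) ℝ) * σmat

/-- The orthonormal frame `(u/‖u‖, v/‖v‖, (u/‖u‖)×(v/‖v‖))` as a matrix (columns). -/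
noncomputable def frameMatrix (p : LocusL) : Matrix (Fin 3) (Fin 3) ℝ :=
  Matrix.of fun i j =>
    (![‖p.1.1‖⁻¹ • p.1.1, ‖p.1.2‖⁻¹ • p.1.2,
        cross3 (‖p.1.1‖⁻¹ • p.1.1) (‖p.1.2‖⁻¹ • p.1.2)] j) i


/-! ### Auxiliary lemmas -/

lemma inner3 (u v : EuclideanSpace ℝ (Fin 3)) :
    ⟪u, v⟫_ℝ = u 0 * v 0 + u 1 * v 1 + u 2 * v 2 := by
  simp [PiLp.inner_apply, Fin.sum_univ_three, RCLike.inner_apply]; ring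

lemma normsq3 (u : EuclideanSpace ℝ (Fin 3)) :
    u 0 ^ 2 + u 1 ^ 2 + u 2 ^ 2 = ‖u‖ ^ 2 := by
  rw [← real_inner_self_eq_norm_sq, inner3]; ring

lemma smul3 (c : ℝ) (u : EuclideanSpace ℝ (Fin 3)) (i : Fin 3) : (c • u) i = c * u i := rfl

lemma pow4inj (a b : ℝ) (ha : 0 ≤ a) (hb : 0 ≤ b) (h : a ^ 4 = b ^ 4) : a = b := by
  have h2 : a ^ 2 = b ^ 2 := by
    nlinarith [sq_nonneg a, sq_nonneg b, sq_nonneg (a^2 - b^2), sq_nonneg (a^2 + b^2)]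
  nlinarith [sq_nonneg (a - b), sq_nonneg (a + b)]

/-- Columns of a matrix as elements of Euclidean space. -/
noncomputable def colE (M : Matrix (Fin 3) (Fin 3) ℝ) (j : Fin 3) : EuclideanSpace ℝ (Fin 3) :=
  (WithLp.equiv 2 (Fin 3 → ℝ)).symm (fun i => M i j)

@[simp] lemma colE_apply (M : Matrix (Fin 3) (Fin 3) ℝ) (j i : Fin 3) : colE M j i = M i j := rfl

lemma frame_mem (a b : EuclideanSpace ℝ (Fin 3))
    (ha : a 0 ^ 2 + a 1 ^ 2 + a 2 ^ 2 = 1) (hb : b 0 ^ 2 + b 1 ^ 2 + b 2 ^ 2 = 1)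
    (hab : a 0 * b 0 + a 1 * b 1 + a 2 * b 2 = 0) :
    (Matrix.of fun i j => (![a, b, cross3 a b] j) i).transpose *
      (Matrix.of fun i j => (![a, b, cross3 a b] j) i) = 1 ∧
    (Matrix.of fun i j => (![a, b, cross3 a b] j) i).det = 1 := by
  constructor
  · ext i j
    fin_cases i <;> fin_cases j <;>
      simp [Matrix.mul_apply, Fin.sum_univ_three, cross3, Matrix.one_apply] <;>
      nlinarith [ha, hb, hab, sq_nonneg (a 0), sq_nonneg (b 0)]
  · rw [Matrix.det_fin_three]
    simp [cross3]
    nlinarith [ha, hb, hab]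

lemma so3_adj (M : Matrix (Fin 3) (Fin 3) ℝ) (h1 : M.transpose * M = 1) (h2 : M.det = 1) :
    M.adjugate = M.transpose := by
  have hM : M * M.adjugate = 1 := by rw [Matrix.mul_adjugate, h2, one_smul]
  calc M.adjugate = 1 * M.adjugate := (one_mul _).symm
    _ = M.transpose * M * M.adjugate := by rw [h1]
    _ = M.transpose * (M * M.adjugate) := by rw [Matrix.mul_assoc]
    _ = M.transpose := by rw [hM, Matrix.mul_one]

lemma so3_col2 (M : Matrix (Fin 3) (Fin 3) ℝ) (h1 : M.transpose * M = 1) (h2 : M.det = 1)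
    (i : Fin 3) : M i 2 = cross3 (colE M 0) (colE M 1) i := by
  have h := so3_adj M h1 h2
  rw [Matrix.adjugate_fin_three] at h
  have h' := congrFun (congrFun h.symm 2) i
  fin_cases i <;> (simp [cross3] at h' ⊢; linarith)

/-- The scaling factor `(q4 w)^(-1/4)`. -/
noncomputable def scaleC (w : EuclideanSpace ℝ (Fin 3)) : ℝ := (q4 w) ^ (-(1/4) : ℝ)

lemma scaleC_pos {w : EuclideanSpace ℝ (Fin 3)} (hw : 0 < q4 w) : 0 < scaleC w :=
  Real.rpow_pos_of_pos hw _

lemma scaleC_pow {w : EuclideanSpace ℝ (Fin 3)} (hw : 0 < q4 w) :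
    (scaleC w) ^ 4 = (q4 w)⁻¹ := by
  rw [scaleC, ← Real.rpow_natCast ((q4 w) ^ (-(1/4) : ℝ)) 4, ← Real.rpow_mul hw.le]
  norm_num [Real.rpow_neg_one]

lemma q4_smul (c : ℝ) (w : EuclideanSpace ℝ (Fin 3)) : q4 (c • w) = c ^ 4 * q4 w := by
  simp only [q4, smul3]; ring

lemma q4_neg (w : EuclideanSpace ℝ (Fin 3)) : q4 (-w) = q4 w := by
  have : (-w : EuclideanSpace ℝ (Fin 3)) = (-1 : ℝ) • w := by rw [neg_one_smul]
  rw [this, q4_smul]; ring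

/-- column facts of an SO3 matrix -/
lemma so3_colsq (M : SO3) (j : Fin 3) :
    M.1 0 j ^ 2 + M.1 1 j ^ 2 + M.1 2 j ^ 2 = 1 := by
  have h := congrFun (congrFun M.2.1 j) j
  simp [Matrix.mul_apply, Fin.sum_univ_three, Matrix.one_apply] at h
  nlinarith [h]

lemma so3_colorth (M : SO3) :
    M.1 0 0 * M.1 0 1 + M.1 1 0 * M.1 1 1 + M.1 2 0 * M.1 2 1 = 0 := by
  have h := congrFun (congrFun M.2.1 0) 1
  simp [Matrix.mul_apply, Fin.sum_univ_three, Matrix.one_apply] at h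
  nlinarith [h]

lemma so3_q4_pos (M : SO3) (j : Fin 3) : 0 < q4 (colE M.1 j) := by
  have h := so3_colsq M j
  simp only [q4, colE_apply]
  nlinarith [sq_nonneg (M.1 0 j ^ 2 - M.1 1 j ^ 2), sq_nonneg (M.1 0 j ^ 2 - M.1 2 j ^ 2),
    sq_nonneg (M.1 1 j ^ 2 - M.1 2 j ^ 2), sq_nonneg (M.1 0 j), sq_nonneg (M.1 1 j),
    sq_nonneg (M.1 2 j)]

/-- The forward map: the frame matrix lies in SO(3). -/
noncomputable def fLoc (p : LocusL) : SO3 := by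
  refine ⟨frameMatrix p, ?_⟩
  obtain ⟨hin, hu, hv, hq1, hq2⟩ := p.2
  have hnu : ‖p.1.1‖ ≠ 0 := norm_ne_zero_iff.2 hu
  have hnv : ‖p.1.2‖ ≠ 0 := norm_ne_zero_iff.2 hv
  have h0 : p.1.1 0 * p.1.2 0 + p.1.1 1 * p.1.2 1 + p.1.1 2 * p.1.2 2 = 0 := by
    rw [← inner3]; exact hin
  have ha : (‖p.1.1‖⁻¹ • p.1.1) 0 ^ 2 + (‖p.1.1‖⁻¹ • p.1.1) 1 ^ 2
      + (‖p.1.1‖⁻¹ • p.1.1) 2 ^ 2 = 1 := by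
    simp only [smul3]; field_simp; linear_combination normsq3 p.1.1
  have hb : (‖p.1.2‖⁻¹ • p.1.2) 0 ^ 2 + (‖p.1.2‖⁻¹ • p.1.2) 1 ^ 2
      + (‖p.1.2‖⁻¹ • p.1.2) 2 ^ 2 = 1 := by
    simp only [smul3]; field_simp; linear_combination normsq3 p.1.2
  have hab : (‖p.1.1‖⁻¹ • p.1.1) 0 * (‖p.1.2‖⁻¹ • p.1.2) 0
      + (‖p.1.1‖⁻¹ • p.1.1) 1 * (‖p.1.2‖⁻¹ • p.1.2) 1
      + (‖p.1.1‖⁻¹ • p.1.1) 2 * (‖p.1.2‖⁻¹ • p.1.2) 2 = 0 := by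
    simp only [smul3]; linear_combination (‖p.1.1‖⁻¹ * ‖p.1.2‖⁻¹) * h0
  exact frame_mem _ _ ha hb hab

/-- The backward map. -/
noncomputable def gLoc (M : SO3) : LocusL := by
  refine ⟨(scaleC (colE M.1 0) • colE M.1 0, scaleC (colE M.1 1) • colE M.1 1),
    ?_, ?_, ?_, ?_, ?_⟩
  · rw [inner3]; simp only [smul3, colE_apply]
    linear_combination (scaleC (colE M.1 0) * scaleC (colE M.1 1)) * so3_colorth M
  · have h := so3_q4_pos M 0
    intro hc
    have : q4 (scaleC (colE M.1 0) • colE M.1 0) = 1 := by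
      rw [q4_smul, scaleC_pow h, inv_mul_cancel₀ h.ne']
    rw [show (scaleC (colE M.1 0) • colE M.1 0 : EuclideanSpace ℝ (Fin 3)) = 0 from hc] at this
    simp [q4] at this
  · have h := so3_q4_pos M 1
    intro hc
    have : q4 (scaleC (colE M.1 1) • colE M.1 1) = 1 := by
      rw [q4_smul, scaleC_pow h, inv_mul_cancel₀ h.ne']
    rw [show (scaleC (colE M.1 1) • colE M.1 1 : EuclideanSpace ℝ (Fin 3)) = 0 from hc] at this
    simp [q4] at this
  · rw [q4_smul, scaleC_pow (so3_q4_pos M 0), inv_mul_cancel₀ (so3_q4_pos M 0).ne']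
  · rw [q4_smul, scaleC_pow (so3_q4_pos M 1), inv_mul_cancel₀ (so3_q4_pos M 1).ne']

lemma norm_colE (M : SO3) (j : Fin 3) : ‖colE M.1 j‖ = 1 := by
  have h := so3_colsq M j
  have h2 : ‖colE M.1 j‖ ^ 2 = 1 := by rw [← normsq3]; simpa using h
  nlinarith [norm_nonneg (colE M.1 j), sq_nonneg (‖colE M.1 j‖ - 1)]

lemma gLoc_fst (M : SO3) : (gLoc M).1.1 = scaleC (colE M.1 0) • colE M.1 0 := rfl
lemma gLoc_snd (M : SO3) : (gLoc M).1.2 = scaleC (colE M.1 1) • colE M.1 1 := rfl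
lemma fLoc_val (p : LocusL) : (fLoc p).1 = frameMatrix p := rfl

lemma fg (M : SO3) : fLoc (gLoc M) = M := by
  apply Subtype.ext
  show frameMatrix (gLoc M) = M.1
  have hn0 : ‖(gLoc M).1.1‖ = scaleC (colE M.1 0) := by
    rw [gLoc_fst, norm_smul, norm_colE, Real.norm_eq_abs,
      abs_of_pos (scaleC_pos (so3_q4_pos M 0)), mul_one]
  have hn1 : ‖(gLoc M).1.2‖ = scaleC (colE M.1 1) := by
    rw [gLoc_snd, norm_smul, norm_colE, Real.norm_eq_abs,
      abs_of_pos (scaleC_pos (so3_q4_pos M 1)), mul_one]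
  have hred0 : ‖(gLoc M).1.1‖⁻¹ • (gLoc M).1.1 = colE M.1 0 := by
    rw [hn0, gLoc_fst, smul_smul, inv_mul_cancel₀ (scaleC_pos (so3_q4_pos M 0)).ne', one_smul]
  have hred1 : ‖(gLoc M).1.2‖⁻¹ • (gLoc M).1.2 = colE M.1 1 := by
    rw [hn1, gLoc_snd, smul_smul, inv_mul_cancel₀ (scaleC_pos (so3_q4_pos M 1)).ne', one_smul]
  ext i j
  fin_cases j
  · show (‖(gLoc M).1.1‖⁻¹ • (gLoc M).1.1) i = M.1 i 0
    rw [hred0]; rfl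
  · show (‖(gLoc M).1.2‖⁻¹ • (gLoc M).1.2) i = M.1 i 1
    rw [hred1]; rfl
  · show cross3 (‖(gLoc M).1.1‖⁻¹ • (gLoc M).1.1) (‖(gLoc M).1.2‖⁻¹ • (gLoc M).1.2) i = M.1 i 2
    rw [hred0, hred1, ← so3_col2 M.1 M.2.1 M.2.2 i]

lemma colE_frame0 (p : LocusL) : colE (frameMatrix p) 0 = ‖p.1.1‖⁻¹ • p.1.1 := by
  ext i; rfl

lemma colE_frame1 (p : LocusL) : colE (frameMatrix p) 1 = ‖p.1.2‖⁻¹ • p.1.2 := by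
  ext i; rfl

lemma gf (p : LocusL) : gLoc (fLoc p) = p := by
  apply Subtype.ext
  obtain ⟨hin, hu, hv, hq1, hq2⟩ := p.2
  have hnu : (0:ℝ) < ‖p.1.1‖ := norm_pos_iff.2 hu
  have hnv : (0:ℝ) < ‖p.1.2‖ := norm_pos_iff.2 hv
  have hq0 : q4 (colE (fLoc p).1 0) = ‖p.1.1‖⁻¹ ^ 4 := by
    rw [fLoc_val, colE_frame0, q4_smul, hq1, mul_one]
  have hq1' : q4 (colE (fLoc p).1 1) = ‖p.1.2‖⁻¹ ^ 4 := by
    rw [fLoc_val, colE_frame1, q4_smul, hq2, mul_one]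
  have hqpos0 : 0 < q4 (colE (fLoc p).1 0) := by rw [hq0]; positivity
  have hqpos1 : 0 < q4 (colE (fLoc p).1 1) := by rw [hq1']; positivity
  have hc0 : scaleC (colE (fLoc p).1 0) = ‖p.1.1‖ := by
    apply pow4inj _ _ (scaleC_pos hqpos0).le hnu.le
    rw [scaleC_pow hqpos0, hq0]; field_simp
  have hc1 : scaleC (colE (fLoc p).1 1) = ‖p.1.2‖ := by
    apply pow4inj _ _ (scaleC_pos hqpos1).le hnv.le
    rw [scaleC_pow hqpos1, hq1']; field_simp
  apply Prod.ext
  · show scaleC (colE (fLoc p).1 0) • colE (fLoc p).1 0 = p.1.1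
    rw [hc0, fLoc_val, colE_frame0, smul_smul, mul_inv_cancel₀ hnu.ne', one_smul]
  · show scaleC (colE (fLoc p).1 1) • colE (fLoc p).1 1 = p.1.2
    rw [hc1, fLoc_val, colE_frame1, smul_smul, mul_inv_cancel₀ hnv.ne', one_smul]

lemma cross3_neg_neg (a b : EuclideanSpace ℝ (Fin 3)) : cross3 (-a) (-b) = cross3 a b := by
  ext i; fin_cases i <;> simp [cross3]

lemma relL_to_SO3 {p q : LocusL} (h : relL p q) : relSO3 (fLoc p) (fLoc q) := by
  rcases h with h | h
  · left; rw [show q = p from Subtype.ext h]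
  · right
    show frameMatrix q = frameMatrix p * σmat
    have h1 : q.1.1 = -p.1.1 := by rw [h]
    have h2 : q.1.2 = -p.1.2 := by rw [h]
    have ha : ‖q.1.1‖⁻¹ • q.1.1 = -(‖p.1.1‖⁻¹ • p.1.1) := by rw [h1, norm_neg, smul_neg]
    have hb : ‖q.1.2‖⁻¹ • q.1.2 = -(‖p.1.2‖⁻¹ • p.1.2) := by rw [h2, norm_neg, smul_neg]
    ext i j
    rw [show σmat = Matrix.diagonal ![-1, -1, 1] from rfl, Matrix.mul_diagonal]
    fin_cases j
    · show (‖q.1.1‖⁻¹ • q.1.1) i = frameMatrix p i 0 * ![-1, -1, 1] 0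
      rw [ha]
      show -((‖p.1.1‖⁻¹ • p.1.1) i) = (‖p.1.1‖⁻¹ • p.1.1) i * ![-1, -1, 1] 0
      simp
    · show (‖q.1.2‖⁻¹ • q.1.2) i = frameMatrix p i 1 * ![-1, -1, 1] 1
      rw [hb]
      show -((‖p.1.2‖⁻¹ • p.1.2) i) = (‖p.1.2‖⁻¹ • p.1.2) i * ![-1, -1, 1] 1
      simp
    · show cross3 (‖q.1.1‖⁻¹ • q.1.1) (‖q.1.2‖⁻¹ • q.1.2) i
        = frameMatrix p i 2 * ![-1, -1, 1] 2
      rw [ha, hb, cross3_neg_neg]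
      show cross3 (‖p.1.1‖⁻¹ • p.1.1) (‖p.1.2‖⁻¹ • p.1.2) i
        = cross3 (‖p.1.1‖⁻¹ • p.1.1) (‖p.1.2‖⁻¹ • p.1.2) i * ![-1, -1, 1] 2
      simp

lemma relSO3_to_L {M N : SO3} (h : relSO3 M N) : relL (gLoc M) (gLoc N) := by
  rcases h with h | h
  · left; rw [show N = M from Subtype.ext h]
  · right
    have hc0 : colE N.1 0 = -colE M.1 0 := by
      ext i
      show N.1 i 0 = -(M.1 i 0)
      rw [h, show σmat = Matrix.diagonal ![-1, -1, 1] from rfl, Matrix.mul_diagonal]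
      simp
    have hc1 : colE N.1 1 = -colE M.1 1 := by
      ext i
      show N.1 i 1 = -(M.1 i 1)
      rw [h, show σmat = Matrix.diagonal ![-1, -1, 1] from rfl, Matrix.mul_diagonal]
      simp
    have hs0 : scaleC (colE N.1 0) = scaleC (colE M.1 0) := by
      rw [hc0, scaleC, scaleC, q4_neg]
    have hs1 : scaleC (colE N.1 1) = scaleC (colE M.1 1) := by
      rw [hc1, scaleC, scaleC, q4_neg]
    show (gLoc N).1 = (-(gLoc M).1.1, -(gLoc M).1.2)
    apply Prod.ext
    · show scaleC (colE N.1 0) • colE N.1 0 = -(scaleC (colE M.1 0) • colE M.1 0)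
      rw [hs0, hc0, smul_neg]
    · show scaleC (colE N.1 1) • colE N.1 1 = -(scaleC (colE M.1 1) • colE M.1 1)
      rw [hs1, hc1, smul_neg]

lemma cont_fLoc : Continuous fLoc := by
  apply Continuous.subtype_mk
  have hu : Continuous fun p : LocusL => p.1.1 := continuous_fst.comp continuous_subtype_val
  have hv : Continuous fun p : LocusL => p.1.2 := continuous_snd.comp continuous_subtype_val
  have hnu : Continuous fun p : LocusL => ‖p.1.1‖⁻¹ :=
    hu.norm.inv₀ fun p => norm_ne_zero_iff.2 p.2.2.1
  have hnv : Continuous fun p : LocusL => ‖p.1.2‖⁻¹ :=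
    hv.norm.inv₀ fun p => norm_ne_zero_iff.2 p.2.2.2.1
  have ha : Continuous fun p : LocusL =>
      (‖p.1.1‖⁻¹ • p.1.1 : EuclideanSpace ℝ (Fin 3)) := hnu.smul hu
  have hb : Continuous fun p : LocusL =>
      (‖p.1.2‖⁻¹ • p.1.2 : EuclideanSpace ℝ (Fin 3)) := hnv.smul hv
  have haj : ∀ j : Fin 3, Continuous fun p : LocusL =>
      (‖p.1.1‖⁻¹ • p.1.1 : EuclideanSpace ℝ (Fin 3)) j :=
    fun j => (continuous_apply j).comp ((PiLp.continuous_ofLp _ _).comp ha)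
  have hbj : ∀ j : Fin 3, Continuous fun p : LocusL =>
      (‖p.1.2‖⁻¹ • p.1.2 : EuclideanSpace ℝ (Fin 3)) j :=
    fun j => (continuous_apply j).comp ((PiLp.continuous_ofLp _ _).comp hb)
  apply continuous_matrix
  intro i j
  fin_cases j
  · exact haj i
  · exact hbj i
  · show Continuous fun p : LocusL =>
      cross3 (‖p.1.1‖⁻¹ • p.1.1) (‖p.1.2‖⁻¹ • p.1.2) i
    fin_cases i <;>
      exact ((haj _).mul (hbj _)).sub ((haj _).mul (hbj _))

lemma cont_gLoc : Continuous gLoc := by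
  apply Continuous.subtype_mk
  have hent : ∀ i j : Fin 3, Continuous fun M : SO3 => M.1 i j :=
    fun i j => (continuous_apply j).comp ((continuous_apply i).comp continuous_subtype_val)
  have hcol : ∀ j : Fin 3, Continuous fun M : SO3 => colE M.1 j :=
    fun j => (PiLp.continuous_toLp _ _).comp (continuous_pi fun i => hent i j)
  have hq : ∀ j : Fin 3, Continuous fun M : SO3 => q4 (colE M.1 j) := by
    intro j
    simp only [q4, colE_apply]
    exact (((hent 0 j).pow 4).add ((hent 1 j).pow 4)).add ((hent 2 j).pow 4)
  have hs : ∀ j : Fin 3, Continuous fun M : SO3 => scaleC (colE M.1 j) := by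
    intro j
    simp only [scaleC]
    exact (hq j).rpow_const fun M => Or.inl (so3_q4_pos M j).ne'
  exact ((hs 0).smul (hcol 0)).prodMk ((hs 1).smul (hcol 1))

noncomputable def locusHomeo : Quot relL ≃ₜ Quot relSO3 where
  toFun := Quot.map fLoc fun _ _ h => relL_to_SO3 h
  invFun := Quot.map gLoc fun _ _ h => relSO3_to_L h
  left_inv := by
    apply Quot.ind
    intro p
    show Quot.mk relL (gLoc (fLoc p)) = Quot.mk relL p
    rw [gf]
  right_inv := by
    apply Quot.ind
    intro M
    show Quot.mk relSO3 (fLoc (gLoc M)) = Quot.mk relSO3 M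
    rw [fg]
  continuous_toFun := continuous_quot_lift _ (continuous_quot_mk.comp cont_fLoc)
  continuous_invFun := continuous_quot_lift _ (continuous_quot_mk.comp cont_gLoc)

theorem locus_homeo_SO3_mod_Z2 :
    ∃ h : Quot relL ≃ₜ Quot relSO3,
      ∀ (p : LocusL) (M : SO3), (M : Matrix (Fin 3) (Fin 3) ℝ) = frameMatrix p →
        h (Quot.mk relL p) = Quot.mk relSO3 M := by
  refine ⟨locusHomeo, fun p M hM => ?_⟩
  have hMp : M = fLoc p := Subtype.ext (by rw [hM]; rfl)
  rw [hMp]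
  rfl
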